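/- Let $R$ be a commutative Noetherian ring and $J, K$ comaximal ideals. Then $J \cap K = J \cdot K$, and if $J = \langle x, c_1, \ldots, c_m \rangle + J^2$ and $K = \langle y, c_1, \ldots, c_m \rangle + K^2$ with $x \in J$, $y \in K$, $x + y = 1$, and $c_i \in J \cap K$, then $J \cap K = \langle xy, c_1, \ldots, c_m \rangle + (J \cap K)^2$. -/

import Mathlib

lemma aux16 {R : Type*} [CommRing R] (J K : Ideal R) (x y : R) (hyK : y ∈ K)
    (C : Ideal R) (hJ : J = Ideal.span {x} ⊔ C ⊔ J ^ 2)
    (hst : Ideal.span {x} ⊔ Ideal.span {y} = ⊤) :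
    J * Ideal.span {y} ≤ Ideal.span {x * y} ⊔ C ⊔ (J * K) ^ 2 := by
  have hSy : Ideal.span {y} ≤ K := (Ideal.span_singleton_le_iff_mem _).2 hyK
  have h1 : J * Ideal.span {y}
      = Ideal.span {x * y} ⊔ C * Ideal.span {y} ⊔ J ^ 2 * Ideal.span {y} := by
    conv_lhs => rw [hJ]
    rw [Ideal.sup_mul, Ideal.sup_mul, Ideal.span_singleton_mul_span_singleton]
  rw [h1]
  refine sup_le (sup_le ?_ ?_) ?_
  · exact le_sup_of_le_left le_sup_left
  · exact le_sup_of_le_left (le_sup_of_le_right Ideal.mul_le_left)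
  · have h2 : J ^ 2 * Ideal.span {y}
        = J ^ 2 * Ideal.span {y} * (Ideal.span {x} ⊔ Ideal.span {y}) := by
      rw [hst, Ideal.mul_top]
    rw [h2, Ideal.mul_sup]
    refine sup_le ?_ ?_
    · have h3 : J ^ 2 * Ideal.span {y} * Ideal.span {x}
          = J ^ 2 * Ideal.span {x * y} := by
        rw [mul_assoc, mul_comm (Ideal.span {y}), Ideal.span_singleton_mul_span_singleton]
      rw [h3]
      exact le_sup_of_le_left (le_sup_of_le_left Ideal.mul_le_right)
    · have h4 : J ^ 2 * Ideal.span {y} * Ideal.span {y} = (J * Ideal.span {y}) ^ 2 := by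
        ring
      rw [h4]
      refine le_sup_of_le_right ?_
      rw [pow_two, pow_two]
      exact Ideal.mul_mono (Ideal.mul_mono le_rfl hSy) (Ideal.mul_mono le_rfl hSy)

theorem stmt16 {R : Type*} [CommRing R] [IsNoetherianRing R]
    (J K : Ideal R) (hco : J + K = ⊤)
    (x y : R) (hx : x ∈ J) (hy : y ∈ K) (hxy : x + y = 1)
    (m : ℕ) (c : Fin m → R) (hc : ∀ i, c i ∈ J ⊓ K)
    (hJ : J = Ideal.span {x} ⊔ Ideal.span (Set.range c) ⊔ J ^ 2)
    (hK : K = Ideal.span {y} ⊔ Ideal.span (Set.range c) ⊔ K ^ 2) :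
    J ⊓ K = J * K ∧
      J ⊓ K = Ideal.span {x * y} ⊔ Ideal.span (Set.range c) ⊔ (J ⊓ K) ^ 2 := by
  have hsup : J ⊔ K = ⊤ := by rwa [← Submodule.add_eq_sup]
  have h1 : J ⊓ K = J * K := (Ideal.mul_eq_inf_of_coprime hsup).symm
  refine ⟨h1, ?_⟩
  set C := Ideal.span (Set.range c) with hC
  have hxyJK : x * y ∈ J ⊓ K := ⟨J.mul_mem_right y hx, K.mul_mem_left x hy⟩
  have hst : Ideal.span {x} ⊔ Ideal.span {y} = ⊤ := by
    rw [Ideal.eq_top_iff_one, ← hxy]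
    exact Submodule.add_mem_sup (Ideal.mem_span_singleton_self x)
      (Ideal.mem_span_singleton_self y)
  apply le_antisymm
  · calc J ⊓ K = (J ⊓ K) * (Ideal.span {x} ⊔ Ideal.span {y}) := by
          rw [hst, Ideal.mul_top]
      _ = (J ⊓ K) * Ideal.span {x} ⊔ (J ⊓ K) * Ideal.span {y} := Ideal.mul_sup _ _ _
      _ ≤ K * Ideal.span {x} ⊔ J * Ideal.span {y} :=
          sup_le_sup (Ideal.mul_mono_left inf_le_right) (Ideal.mul_mono_left inf_le_left)
      _ ≤ Ideal.span {x * y} ⊔ C ⊔ (J ⊓ K) ^ 2 := by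
          refine sup_le ?_ ?_
          · have := aux16 K J y x hx C hK (by rwa [sup_comm] at hst)
            rwa [mul_comm y x, mul_comm K J, ← h1] at this
          · have := aux16 J K x y hy C hJ hst
            rwa [← h1] at this
  · refine sup_le (sup_le ?_ ?_) ?_
    · exact (Ideal.span_singleton_le_iff_mem _).2 hxyJK
    · rw [hC, Ideal.span_le]
      rintro _ ⟨i, rfl⟩
      exact hc i
    · exact Ideal.pow_le_self two_ne_zero
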